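/- Let μ = U([-1,1]) and ν = ½U([-2,-1]) + ½U([1,2]). For ε ∈ (0,1), define g_ε(x) = x − 1 for x ≤ −ε, g_ε(x) = ((1+ε)/ε)x for x ∈ [−ε, ε], and g_ε(x) = x + 1 for x ≥ ε. Then g_ε#μ = ((1−ε)/2)U([−2, −1−ε]) + ε U([−1−ε, 1+ε]) + ((1−ε)/2)U([1+ε, 2]), and g_ε#μ converges weakly to ν as ε → 0; in particular W₂²(g_ε#μ, ν) → 0. -/

import Mathlib

open Set MeasureTheory Filter
open scoped ENNReal Topology BoundedContinuousFunction

/-- Squared 2-Wasserstein cost between measures on ℝ (infimum over couplings of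
the expected squared difference). -/
noncomputable def W2sq (ρ₁ ρ₂ : MeasureTheory.Measure ℝ) : ℝ≥0∞ :=
  ⨅ π ∈ {π : MeasureTheory.Measure (ℝ × ℝ) |
      π.map Prod.fst = ρ₁ ∧ π.map Prod.snd = ρ₂},
    ∫⁻ q, ENNReal.ofReal ((q.1 - q.2) ^ 2) ∂π

/-- The uniform probability measure on [-1,1]. -/
noncomputable def muUnif : MeasureTheory.Measure ℝ :=
  (2 : ℝ≥0∞)⁻¹ • MeasureTheory.volume.restrict (Set.Icc (-1 : ℝ) 1)

/-- The measure ½ U([-2,-1]) + ½ U([1,2]). -/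
noncomputable def nuTarget : MeasureTheory.Measure ℝ :=
  (2 : ℝ≥0∞)⁻¹ • MeasureTheory.volume.restrict (Set.Icc (-2 : ℝ) (-1)) +
  (2 : ℝ≥0∞)⁻¹ • MeasureTheory.volume.restrict (Set.Icc (1 : ℝ) 2)

/-- The continuous approximation g_ε of the discontinuous transport map. -/
noncomputable def gEps (ε : ℝ) : ℝ → ℝ := fun x =>
  if x ≤ -ε then x - 1 else if x ≤ ε then ((1 + ε) / ε) * x else x + 1

/-- The limiting (discontinuous) transport map. -/
noncomputable def g0 : ℝ → ℝ := fun x => if x ≤ 0 then x - 1 else x + 1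

lemma measurable_g0 : Measurable g0 := by
  unfold g0
  exact Measurable.ite (measurableSet_le measurable_id measurable_const)
    (measurable_id.sub measurable_const) (measurable_id.add measurable_const)

lemma measurable_gEps (ε : ℝ) : Measurable (gEps ε) := by
  unfold gEps
  exact Measurable.ite (measurableSet_le measurable_id measurable_const)
    (measurable_id.sub measurable_const)
    (Measurable.ite (measurableSet_le measurable_id measurable_const)
      (measurable_const.mul measurable_id) (measurable_id.add measurable_const))

lemma Iic_inter_Icc' (x y a : ℝ) : Iic a ∩ Icc x y = Icc x (min y a) := by
  ext z; simp only [mem_inter_iff, mem_Iic, mem_Icc, le_min_iff]; tauto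

lemma inv2_mul (L : ℝ) : (2 : ℝ≥0∞)⁻¹ * ENNReal.ofReal L = ENNReal.ofReal (2⁻¹ * L) := by
  rw [ENNReal.ofReal_mul (by norm_num), ENNReal.ofReal_inv_of_pos (by norm_num)]
  norm_num

lemma ofReal_mul_inv_ofReal (c d L : ℝ) (hc : 0 ≤ c) (hd : 0 < d) :
    ENNReal.ofReal c * (ENNReal.ofReal d)⁻¹ * ENNReal.ofReal L = ENNReal.ofReal (c / d * L) := by
  rw [ENNReal.ofReal_mul (div_nonneg hc hd.le), ENNReal.ofReal_div_of_pos hd, div_eq_mul_inv]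

lemma muUnif_Iic (t : ℝ) : muUnif (Iic t) = ENNReal.ofReal (2⁻¹ * (min 1 t + 1)) := by
  rw [muUnif, Measure.smul_apply, Measure.restrict_apply measurableSet_Iic,
    Iic_inter_Icc', Real.volume_Icc, smul_eq_mul, inv2_mul]
  congr 1; ring

lemma comp_Iic (c d x y a : ℝ) (hc : 0 ≤ c) (hd : 0 < d) :
    (ENNReal.ofReal c • ((ENNReal.ofReal d)⁻¹ • MeasureTheory.volume.restrict (Set.Icc x y))) (Iic a)
      = ENNReal.ofReal (c / d * (min y a - x)) := by
  rw [Measure.smul_apply, Measure.smul_apply, Measure.restrict_apply measurableSet_Iic,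
    Iic_inter_Icc', Real.volume_Icc, smul_eq_mul, smul_eq_mul, ← mul_assoc,
    ofReal_mul_inv_ofReal c d _ hc hd]

lemma nuTarget_Iic (a : ℝ) : nuTarget (Iic a) =
    ENNReal.ofReal (2⁻¹ * (min (-1) a + 2)) + ENNReal.ofReal (2⁻¹ * (min 2 a - 1)) := by
  rw [nuTarget, Measure.add_apply, Measure.smul_apply, Measure.smul_apply,
    Measure.restrict_apply measurableSet_Iic, Measure.restrict_apply measurableSet_Iic,
    Iic_inter_Icc', Iic_inter_Icc', Real.volume_Icc, Real.volume_Icc, smul_eq_mul, smul_eq_mul,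
    inv2_mul, inv2_mul]
  norm_num

instance : IsFiniteMeasure muUnif := by
  constructor
  rw [muUnif, Measure.smul_apply, Measure.restrict_apply_univ, Real.volume_Icc, smul_eq_mul, inv2_mul]
  exact ENNReal.ofReal_lt_top

instance : IsFiniteMeasure nuTarget := by
  constructor
  rw [nuTarget, Measure.add_apply]
  simp only [Measure.smul_apply, Measure.restrict_apply_univ, Real.volume_Icc, smul_eq_mul, inv2_mul]
  exact ENNReal.add_lt_top.mpr ⟨ENNReal.ofReal_lt_top, ENNReal.ofReal_lt_top⟩

lemma gEps_preimage_Iic {ε : ℝ} (hε : 0 < ε) (hε1 : ε < 1) (a : ℝ) :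
    gEps ε ⁻¹' Iic a =
      Iic (if a ≤ -(1+ε) then a + 1 else if a ≤ 1 + ε then ε / (1+ε) * a else a - 1) := by
  have h1 : (0:ℝ) < 1 + ε := by linarith
  have hkey : (1+ε)/ε * ε = 1+ε := div_mul_cancel₀ _ hε.ne'
  have hkey2 : ε/(1+ε) * (1+ε) = ε := div_mul_cancel₀ _ h1.ne'
  have htpos : (0:ℝ) < (1+ε)/ε := by positivity
  have hspos : (0:ℝ) < ε/(1+ε) := by positivity
  ext x
  simp only [mem_preimage, mem_Iic, gEps]
  split_ifs with hx1 ha1 ha2 hx2 ha1 ha2 ha1 ha2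
  · constructor <;> intro <;> linarith
  · refine iff_of_true (by linarith) ?_
    nlinarith [mul_lt_mul_of_pos_left (not_le.mp ha1) hspos, hkey2]
  · exact iff_of_true (by linarith) (by linarith)
  · refine iff_of_false (fun h => ?_) (by push_neg; linarith [not_le.mp hx1])
    nlinarith [mul_lt_mul_of_pos_left (not_le.mp hx1) htpos, hkey]
  · constructor <;> intro h
    · have h2 := mul_le_mul_of_nonneg_left h hspos.le
      have h3 : ε/(1+ε) * ((1+ε)/ε * x) = x := by field_simp
      linarith
    · have h2 := mul_le_mul_of_nonneg_left h htpos.le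
      have h3 : (1+ε)/ε * (ε/(1+ε) * a) = a := by field_simp
      linarith
  · refine iff_of_true ?_ (by linarith)
    have h2 := mul_le_mul_of_nonneg_left hx2 htpos.le
    linarith [hkey, not_le.mp ha1]
  · exact iff_of_false (by intro h; linarith) (by push_neg; linarith [not_le.mp hx2])
  · refine iff_of_false (by intro h; linarith [not_le.mp hx2]) ?_
    push_neg
    have h2 := mul_le_mul_of_nonneg_left ha2 hspos.le
    linarith [hkey2, not_le.mp hx2]
  · constructor <;> intro <;> linarith

lemma g0_preimage_Iic (a : ℝ) :
    g0 ⁻¹' Iic a = Iic (if a ≤ -1 then a + 1 else if a < 1 then 0 else a - 1) := by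
  ext x
  simp only [mem_preimage, mem_Iic, g0]
  split_ifs with hx ha1 ha2 ha1 ha2 <;> constructor <;> intro <;> linarith

lemma map_gEps {ε : ℝ} (hε : 0 < ε) (hε1 : ε < 1) :
    MeasureTheory.Measure.map (gEps ε) muUnif =
      ENNReal.ofReal ((1 - ε) / 2) •
        ((ENNReal.ofReal (1 - ε))⁻¹ •
          MeasureTheory.volume.restrict (Set.Icc (-2 : ℝ) (-(1 + ε)))) +
      ENNReal.ofReal ε •
        ((ENNReal.ofReal (2 * (1 + ε)))⁻¹ •
          MeasureTheory.volume.restrict (Set.Icc (-(1 + ε)) (1 + ε))) +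
      ENNReal.ofReal ((1 - ε) / 2) •
        ((ENNReal.ofReal (1 - ε))⁻¹ •
          MeasureTheory.volume.restrict (Set.Icc (1 + ε) (2 : ℝ))) := by
  have h1 : (0:ℝ) < 1 + ε := by linarith
  have h2 : (0:ℝ) < 1 - ε := by linarith
  have h3 : (0:ℝ) < 2 * (1 + ε) := by linarith
  have hcnn : (0:ℝ) ≤ (1 - ε) / 2 := by linarith
  have hkey2 : ε/(1+ε) * (1+ε) = ε := div_mul_cancel₀ _ h1.ne'
  have hspos : (0:ℝ) < ε/(1+ε) := by positivity
  haveI := Measure.isFiniteMeasure_map muUnif (gEps ε)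
  refine Measure.ext_of_Iic _ _ (fun a => ?_)
  rw [Measure.map_apply (measurable_gEps ε) measurableSet_Iic, gEps_preimage_Iic hε hε1,
    muUnif_Iic, Measure.add_apply, Measure.add_apply, comp_Iic _ _ _ _ _ hcnn h2,
    comp_Iic _ _ _ _ _ hε.le h3, comp_Iic _ _ _ _ _ hcnn h2]
  have hd : (1 - ε) / 2 / (1 - ε) = 1 / 2 := by field_simp
  rw [hd]
  rcases le_or_gt a (-2) with hA | hA
  · rw [if_pos (by linarith), min_eq_right (by linarith : a + 1 ≤ 1),
      min_eq_right (by linarith : a ≤ -(1+ε)), min_eq_right (by linarith : a ≤ 1+ε),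
      min_eq_right (by linarith : a ≤ 2),
      ENNReal.ofReal_of_nonpos (show 2⁻¹ * (a + 1 + 1) ≤ 0 by linarith),
      ENNReal.ofReal_of_nonpos (show 1 / 2 * (a - -2) ≤ 0 by linarith),
      ENNReal.ofReal_of_nonpos (show ε / (2 * (1 + ε)) * (a - -(1 + ε)) ≤ 0 from
        mul_nonpos_of_nonneg_of_nonpos (by positivity) (by linarith)),
      ENNReal.ofReal_of_nonpos (show 1 / 2 * (a - (1 + ε)) ≤ 0 by linarith)]
    simp
  rcases le_or_gt a (-(1+ε)) with hB | hB
  · rw [if_pos hB, min_eq_right (by linarith : a + 1 ≤ 1),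
      min_eq_right hB, min_eq_right (by linarith : a ≤ 1+ε), min_eq_right (by linarith : a ≤ 2),
      ENNReal.ofReal_of_nonpos (show ε / (2 * (1 + ε)) * (a - -(1 + ε)) ≤ 0 from
        mul_nonpos_of_nonneg_of_nonpos (by positivity) (by linarith)),
      ENNReal.ofReal_of_nonpos (show 1 / 2 * (a - (1 + ε)) ≤ 0 by linarith), add_zero, add_zero]
    congr 1; ring
  rcases le_or_gt a (1+ε) with hC | hC
  · have hτ : ε/(1+ε) * a ≤ 1 := by
      have := mul_le_mul_of_nonneg_left hC hspos.le
      linarith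
    rw [if_neg (by linarith), if_pos hC, min_eq_right hτ,
      min_eq_left (by linarith : -(1+ε) ≤ a), min_eq_right hC, min_eq_right (by linarith : a ≤ 2),
      ENNReal.ofReal_of_nonpos (show 1 / 2 * (a - (1 + ε)) ≤ 0 by linarith), add_zero,
      ← ENNReal.ofReal_add (by linarith) (mul_nonneg (by positivity) (by linarith))]
    congr 1; field_simp; ring
  rcases le_or_gt a 2 with hD | hD
  · rw [if_neg (by linarith), if_neg (by linarith), min_eq_right (by linarith : a - 1 ≤ 1),
      min_eq_left (by linarith : -(1+ε) ≤ a), min_eq_left (by linarith : (1:ℝ)+ε ≤ a),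
      min_eq_right hD,
      ← ENNReal.ofReal_add (by linarith) (mul_nonneg (by positivity) (by linarith)),
      ← ENNReal.ofReal_add (add_nonneg (by linarith) (mul_nonneg (by positivity) (by linarith)))
        (by linarith)]
    congr 1; field_simp; ring
  · rw [if_neg (by linarith), if_neg (by linarith), min_eq_left (by linarith : (1:ℝ) ≤ a - 1),
      min_eq_left (by linarith : -(1+ε) ≤ a), min_eq_left (by linarith : (1:ℝ)+ε ≤ a),
      min_eq_left (by linarith : (2:ℝ) ≤ a),
      ← ENNReal.ofReal_add (by linarith) (mul_nonneg (by positivity) (by linarith)),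
      ← ENNReal.ofReal_add (add_nonneg (by linarith) (mul_nonneg (by positivity) (by linarith)))
        (by linarith)]
    congr 1; field_simp; ring

lemma map_g0 : MeasureTheory.Measure.map g0 muUnif = nuTarget := by
  haveI := Measure.isFiniteMeasure_map muUnif g0
  refine Measure.ext_of_Iic _ _ (fun a => ?_)
  rw [Measure.map_apply measurable_g0 measurableSet_Iic, g0_preimage_Iic, muUnif_Iic,
    nuTarget_Iic]
  rcases le_or_gt a (-2) with hA | hA
  · rw [if_pos (by linarith), min_eq_right (by linarith : a + 1 ≤ 1),
      min_eq_right (by linarith : a ≤ -1), min_eq_right (by linarith : a ≤ 2),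
      ENNReal.ofReal_of_nonpos (show 2⁻¹ * (a + 1 + 1) ≤ 0 by linarith),
      ENNReal.ofReal_of_nonpos (show 2⁻¹ * (a + 2) ≤ 0 by linarith),
      ENNReal.ofReal_of_nonpos (show 2⁻¹ * (a - 1) ≤ 0 by linarith)]
    simp
  rcases le_or_gt a (-1) with hB | hB
  · rw [if_pos hB, min_eq_right (by linarith : a + 1 ≤ 1), min_eq_right hB,
      min_eq_right (by linarith : a ≤ 2),
      ENNReal.ofReal_of_nonpos (show 2⁻¹ * (a - 1) ≤ 0 by linarith), add_zero]
    congr 1; ring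
  rcases lt_or_ge a 1 with hC | hC
  · rw [if_neg (by linarith), if_pos hC, min_eq_right (by linarith : (0:ℝ) ≤ 1),
      min_eq_left (by linarith : (-1:ℝ) ≤ a), min_eq_right (by linarith : a ≤ 2),
      ENNReal.ofReal_of_nonpos (show 2⁻¹ * (a - 1) ≤ 0 by linarith), add_zero]
    congr 1; ring
  rcases le_or_gt a 2 with hD | hD
  · rw [if_neg (by linarith), if_neg (by linarith), min_eq_right (by linarith : a - 1 ≤ 1),
      min_eq_left (by linarith : (-1:ℝ) ≤ a), min_eq_right hD,
      ← ENNReal.ofReal_add (by linarith) (by linarith)]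
    congr 1; ring
  · rw [if_neg (by linarith), if_neg (by linarith), min_eq_left (by linarith : (1:ℝ) ≤ a - 1),
      min_eq_left (by linarith : (-1:ℝ) ≤ a), min_eq_left (by linarith : (2:ℝ) ≤ a),
      ← ENNReal.ofReal_add (by linarith) (by linarith)]
    congr 1; ring

lemma hae_ne_zero : ∀ᵐ x ∂muUnif, x ≠ (0:ℝ) := by
  rw [ae_iff]
  have hs : {x : ℝ | ¬ x ≠ 0} = {0} := by ext x; simp
  rw [hs, muUnif, Measure.smul_apply, Measure.restrict_apply (measurableSet_singleton 0)]
  have h0 : MeasureTheory.volume ({(0:ℝ)} ∩ Icc (-1:ℝ) 1) = 0 :=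
    measure_mono_null inter_subset_left Real.volume_singleton
  rw [h0, smul_eq_mul, mul_zero]

lemma gEps_eventually_eq (x : ℝ) (hx : x ≠ 0) :
    ∀ᶠ ε in 𝓝[Set.Ioo (0:ℝ) 1] 0, gEps ε x = g0 x := by
  have hx' : 0 < |x| := abs_pos.mpr hx
  filter_upwards [self_mem_nhdsWithin, mem_nhdsWithin_of_mem_nhds (Iio_mem_nhds hx')]
    with ε hε1 hε2
  obtain ⟨hε, _⟩ := hε1
  rcases lt_or_gt_of_ne hx with hneg | hpos
  · have h : x ≤ -ε := by rw [abs_of_neg hneg] at hε2; linarith [mem_Iio.mp hε2]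
    simp only [gEps, g0, if_pos h, if_pos hneg.le]
  · have hne : ¬ x ≤ -ε := by push_neg; linarith
    have hne2 : ¬ x ≤ ε := by rw [abs_of_pos hpos] at hε2; push_neg; exact mem_Iio.mp hε2
    have hne3 : ¬ x ≤ 0 := by push_neg; exact hpos
    simp only [gEps, g0, if_neg hne, if_neg hne2, if_neg hne3]

theorem gEps_pushforward_and_convergence :
    (∀ ε ∈ Set.Ioo (0 : ℝ) 1,
      MeasureTheory.Measure.map (gEps ε) muUnif =
        ENNReal.ofReal ((1 - ε) / 2) •
          ((ENNReal.ofReal (1 - ε))⁻¹ •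
            MeasureTheory.volume.restrict (Set.Icc (-2 : ℝ) (-(1 + ε)))) +
        ENNReal.ofReal ε •
          ((ENNReal.ofReal (2 * (1 + ε)))⁻¹ •
            MeasureTheory.volume.restrict (Set.Icc (-(1 + ε)) (1 + ε))) +
        ENNReal.ofReal ((1 - ε) / 2) •
          ((ENNReal.ofReal (1 - ε))⁻¹ •
            MeasureTheory.volume.restrict (Set.Icc (1 + ε) (2 : ℝ)))) ∧
    (∀ f : ℝ →ᵇ ℝ,
      Tendsto (fun ε => ∫ x, f x ∂(MeasureTheory.Measure.map (gEps ε) muUnif))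
        (𝓝[Set.Ioo (0 : ℝ) 1] 0) (𝓝 (∫ x, f x ∂nuTarget))) ∧
    Tendsto (fun ε => W2sq (MeasureTheory.Measure.map (gEps ε) muUnif) nuTarget)
      (𝓝[Set.Ioo (0 : ℝ) 1] 0) (𝓝 0) := by
  refine ⟨fun ε hε => map_gEps hε.1 hε.2, ?_, ?_⟩
  · -- weak convergence
    intro f
    have hint : ∀ ε : ℝ, ∫ x, f x ∂(MeasureTheory.Measure.map (gEps ε) muUnif)
        = ∫ x, f (gEps ε x) ∂muUnif := fun ε =>
      integral_map (measurable_gEps ε).aemeasurable f.continuous.aestronglyMeasurable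
    have hnu : ∫ x, f x ∂nuTarget = ∫ x, f (g0 x) ∂muUnif := by
      rw [← map_g0, integral_map measurable_g0.aemeasurable f.continuous.aestronglyMeasurable]
    rw [hnu]
    refine Tendsto.congr (fun ε => (hint ε).symm) ?_
    refine tendsto_integral_filter_of_dominated_convergence (fun _ => ‖f‖) ?_ ?_ ?_ ?_
    · exact Eventually.of_forall fun ε =>
        (f.continuous.measurable.comp (measurable_gEps ε)).aestronglyMeasurable
    · exact Eventually.of_forall fun ε =>
        Eventually.of_forall fun x => f.norm_coe_le_norm _
    · exact integrable_const _
    · filter_upwards [hae_ne_zero] with x hx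
      refine Tendsto.congr'
        ((gEps_eventually_eq x hx).mono fun ε h => (congrArg f h).symm) tendsto_const_nhds
  · -- W2 convergence
    have hbound : ∀ ε ∈ Set.Ioo (0:ℝ) 1,
        W2sq (MeasureTheory.Measure.map (gEps ε) muUnif) nuTarget
          ≤ ENNReal.ofReal (16 * ε) := by
      rintro ε ⟨hε, hε1⟩
      have hpair : Measurable (fun x => (gEps ε x, g0 x)) :=
        (measurable_gEps ε).prodMk measurable_g0
      set π := MeasureTheory.Measure.map (fun x => (gEps ε x, g0 x)) muUnif with hπ
      have hmem : π ∈ {π : MeasureTheory.Measure (ℝ × ℝ) |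
          π.map Prod.fst = MeasureTheory.Measure.map (gEps ε) muUnif ∧
          π.map Prod.snd = nuTarget} := by
        constructor
        · rw [hπ, Measure.map_map measurable_fst hpair]; rfl
        · rw [hπ, Measure.map_map measurable_snd hpair]; exact map_g0
      rw [W2sq]
      refine le_trans (iInf₂_le π hmem) ?_
      rw [hπ, lintegral_map (f := fun q : ℝ × ℝ => ENNReal.ofReal ((q.1 - q.2) ^ 2)) ((measurable_fst.sub measurable_snd).pow_const 2).ennreal_ofReal hpair]
      have hptwise : ∀ x : ℝ, ENNReal.ofReal ((gEps ε x - g0 x) ^ 2)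
          ≤ (Set.Ioo (-ε) ε).indicator (fun _ => ENNReal.ofReal 16) x := by
        intro x
        by_cases hx : x ∈ Set.Ioo (-ε) ε
        · rw [indicator_of_mem hx]
          refine ENNReal.ofReal_le_ofReal ?_
          obtain ⟨hx1, hx2⟩ := hx
          have h1 : ¬ x ≤ -ε := by push_neg; exact hx1
          have h2 : x ≤ ε := hx2.le
          have hkey : (1+ε)/ε * ε = 1+ε := div_mul_cancel₀ _ hε.ne'
          have htnn : (0:ℝ) ≤ (1+ε)/ε := by positivity
          have ht1 : (1+ε)/ε * x ≤ 1+ε := by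
            nlinarith [mul_le_mul_of_nonneg_left h2 htnn]
          have ht2 : -(1+ε) ≤ (1+ε)/ε * x := by
            nlinarith [mul_le_mul_of_nonneg_left hx1.le htnn]
          simp only [gEps, g0, if_neg h1, if_pos h2]
          split_ifs <;> nlinarith
        · rw [indicator_of_notMem hx]
          have heq : gEps ε x = g0 x := by
            simp only [Set.mem_Ioo, not_and_or, not_lt] at hx
            simp only [gEps, g0]
            rcases hx with hx | hx
            · rw [if_pos (by linarith), if_pos (by linarith)]
            · rw [if_neg (show ¬ x ≤ -ε by push_neg; linarith),
                if_neg (show ¬ x ≤ 0 by push_neg; linarith)]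
              split_ifs with h
              · have hxe : x = ε := le_antisymm h hx
                rw [hxe, div_mul_cancel₀ _ hε.ne']
                ring
              · rfl
          rw [heq]
          simp
      calc ∫⁻ x, ENNReal.ofReal ((gEps ε x - g0 x) ^ 2) ∂muUnif
          ≤ ∫⁻ x, (Set.Ioo (-ε) ε).indicator (fun _ => ENNReal.ofReal 16) x ∂muUnif :=
            lintegral_mono hptwise
        _ = ENNReal.ofReal 16 * muUnif (Set.Ioo (-ε) ε) := by
            rw [lintegral_indicator measurableSet_Ioo, setLIntegral_const]
        _ ≤ ENNReal.ofReal 16 * ENNReal.ofReal ε := by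
            gcongr
            rw [muUnif, Measure.smul_apply, Measure.restrict_apply measurableSet_Ioo, smul_eq_mul]
            calc (2:ℝ≥0∞)⁻¹ * MeasureTheory.volume (Set.Ioo (-ε) ε ∩ Set.Icc (-1) 1)
                ≤ (2:ℝ≥0∞)⁻¹ * MeasureTheory.volume (Set.Ioo (-ε) ε) := by
                  gcongr; exact inter_subset_left
              _ = ENNReal.ofReal ε := by
                  rw [Real.volume_Ioo, inv2_mul]; congr 1; ring
        _ = ENNReal.ofReal (16 * ε) := by
            rw [← ENNReal.ofReal_mul (by norm_num)]
    refine tendsto_of_tendsto_of_tendsto_of_le_of_le' (h := fun ε => ENNReal.ofReal (16 * ε))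
      (tendsto_const_nhds : Tendsto (fun _ : ℝ => (0:ℝ≥0∞)) (𝓝[Set.Ioo (0:ℝ) 1] 0) (𝓝 0))
      ?_ (Eventually.of_forall fun ε => zero_le) ?_
    · have h16 : Tendsto (fun ε : ℝ => 16 * ε) (𝓝[Set.Ioo (0:ℝ) 1] 0) (𝓝 0) := by
        have h : Tendsto (fun ε : ℝ => 16 * ε) (𝓝 0) (𝓝 (16 * 0)) :=
          (continuous_const.mul continuous_id).tendsto 0
        simpa using h.mono_left (nhdsWithin_le_nhds (s := Set.Ioo (0:ℝ) 1))
      have := (ENNReal.continuous_ofReal.tendsto 0).comp h16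
      rw [ENNReal.ofReal_zero] at this
      exact this
    · filter_upwards [self_mem_nhdsWithin] with ε hε using hbound ε hε
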